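/- Let k be an algebraically closed field, O = k[[t]], and let (V, F•, θ) be a local parabolic triple: V is a free O-module of rank r with filtration V = V⁰ ⊃ V¹ ⊃ ⋯ ⊃ V^σ = t·V, with dim_k(V^{i−1}/V^{i}) = m_i, the m_i rearranged decreasingly give a partition n₁ ≥ ⋯ ≥ n_σ of r with conjugate partition μ₁ ≥ ⋯ ≥ μ_{n₁}; θ ∈ End_O(V) satisfies θ(V^i) ⊆ V^{i+1} for 0 ≤ i ≤ σ−1; and the characteristic polynomial of θ factors as f = ∏_{i=1}^{n₁} f_i in O[λ], where each f_i is an Eisenstein polynomial of degree μ_i and for i ≠ j the difference of the constant terms of f_i and f_j lies in t·k[[t]] but not in t²·k[[t]]. For 1 < i ≤ n₁, let q_i : V → V/Ker f_i(θ) be the quotient map, where Ker f_i(θ) = { v ∈ V : f_i(θ)(v) = 0 }. Then the image of Ker f₁(θ) under q_i equals the kernel of the endomorphism of V/Ker f_i(θ) induced by f₁(θ). In particular, the sum Ker f₁(θ) + Ker f_i(θ) is direct and is a direct summand of V. -/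

import Mathlib

open Pointwise

set_option maxHeartbeats 2000000 in
/-- **(Proposition 4.2 of the paper, "first step direct summand".)**
Let `k` be algebraically closed, `O = k[[t]]`, and `(V, W•, θ)` a local parabolic triple:
`V` is free of rank `r` over `O` with filtration `V = W 0 ⊃ W 1 ⊃ ⋯ ⊃ W σ = t•V` whose graded
fiber dimensions rearrange to the partition `n` of `r` with conjugate `μ`; `θ(W i) ⊆ W (i+1)`;
and the characteristic polynomial of `θ` factors as `∏_{i=1}^{n 1} f i` with `f i` Eisenstein
of degree `μ i`, the constant terms of the `f i` being pairwise non-congruent mod `t²`.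
Then for `1 < i ≤ n 1`, the image of `Ker f₁(θ)` in `V/Ker fᵢ(θ)` is the kernel of the
endomorphism induced by `f₁(θ)`; in particular `Ker f₁(θ) + Ker fᵢ(θ)` is a direct sum and a
direct summand of `V`. -/
theorem parabolic_local_first_step {k : Type*} [Field k] [IsAlgClosed k]
    {V : Type*} [AddCommGroup V] [Module (PowerSeries k) V]
    [Module.Free (PowerSeries k) V] [Module.Finite (PowerSeries k) V]
    (r σ : ℕ) (hr : 1 ≤ r) (hσ : 1 ≤ σ)
    (hrank : Module.finrank (PowerSeries k) V = r)
    (W : ℕ → Submodule (PowerSeries k) V)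
    (hW0 : W 0 = ⊤)
    (hWσ : W σ = (PowerSeries.X : PowerSeries k) • (⊤ : Submodule (PowerSeries k) V))
    (hchain : ∀ i < σ, W (i + 1) < W i)
    (n : ℕ → ℕ)
    (hanti : ∀ i j, 1 ≤ i → i ≤ j → j ≤ σ → n j ≤ n i)
    (hpos : ∀ i, 1 ≤ i → i ≤ σ → 0 < n i)
    (hsum : ∑ i ∈ Finset.Icc 1 σ, n i = r)
    (hdims : Multiset.map n (Finset.Icc 1 σ).val =
      Multiset.map (fun i => Module.finrank k (RestrictScalars k (PowerSeries k)
        (↥(W (i - 1)) ⧸ (W i).comap (W (i - 1)).subtype))) (Finset.Icc 1 σ).val)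
    (μ : ℕ → ℕ)
    (hμ : ∀ t, μ t = ((Finset.Icc 1 σ).filter (fun l => t ≤ n l)).card)
    (θ : Module.End (PowerSeries k) V)
    (hθ : ∀ i < σ, Submodule.map θ (W i) ≤ W (i + 1))
    (f : ℕ → Polynomial (PowerSeries k))
    (hmonic : ∀ i, 1 ≤ i → i ≤ n 1 → (f i).Monic)
    (hdeg : ∀ i, 1 ≤ i → i ≤ n 1 → (f i).natDegree = μ i)
    (hEis : ∀ i, 1 ≤ i → i ≤ n 1 →
      (f i).IsEisensteinAt (Ideal.span {(PowerSeries.X : PowerSeries k)}))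
    (hconst : ∀ i j, 1 ≤ i → i ≤ n 1 → 1 ≤ j → j ≤ n 1 → i ≠ j →
      ((f i).coeff 0 - (f j).coeff 0) ∈ Ideal.span {(PowerSeries.X : PowerSeries k)} ∧
      ((f i).coeff 0 - (f j).coeff 0) ∉ Ideal.span {(PowerSeries.X : PowerSeries k)} ^ 2)
    (hchar : LinearMap.charpoly θ = ∏ i ∈ Finset.Icc 1 (n 1), f i) :
    ∀ i, 1 < i → i ≤ n 1 →
      Submodule.map (LinearMap.ker (Polynomial.aeval θ (f i))).mkQ
          (LinearMap.ker (Polynomial.aeval θ (f 1)))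
        = LinearMap.ker (Submodule.mapQ (LinearMap.ker (Polynomial.aeval θ (f i)))
            (LinearMap.ker (Polynomial.aeval θ (f i))) (Polynomial.aeval θ (f 1))
            (fun x hx => by
              have hcomm : Polynomial.aeval θ (f i) * Polynomial.aeval θ (f 1)
                  = Polynomial.aeval θ (f 1) * Polynomial.aeval θ (f i) := by
                rw [← map_mul, ← map_mul, mul_comm]
              have hx0 : Polynomial.aeval θ (f i) x = 0 := LinearMap.mem_ker.mp hx
              have : Polynomial.aeval θ (f i) (Polynomial.aeval θ (f 1) x) = 0 := by
                calc Polynomial.aeval θ (f i) (Polynomial.aeval θ (f 1) x)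
                    = (Polynomial.aeval θ (f i) * Polynomial.aeval θ (f 1)) x := rfl
                  _ = (Polynomial.aeval θ (f 1) * Polynomial.aeval θ (f i)) x := by
                      rw [hcomm]
                  _ = Polynomial.aeval θ (f 1) (Polynomial.aeval θ (f i) x) := rfl
                  _ = 0 := by rw [hx0, map_zero]
              exact LinearMap.mem_ker.mpr this)) ∧
      Disjoint (LinearMap.ker (Polynomial.aeval θ (f 1)))
        (LinearMap.ker (Polynomial.aeval θ (f i))) ∧
      ∃ U : Submodule (PowerSeries k) V,
        IsCompl (LinearMap.ker (Polynomial.aeval θ (f 1)) ⊔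
          LinearMap.ker (Polynomial.aeval θ (f i))) U := by
  intro i hi1 hin
  classical
  have h1le : (1:ℕ) ≤ n 1 := by omega
  -- numerical facts about μ
  have hμ1 : μ 1 = σ := by
    rw [hμ]
    have hfil : (Finset.Icc 1 σ).filter (fun l => 1 ≤ n l) = Finset.Icc 1 σ := by
      apply Finset.filter_true_of_mem
      intro x hx
      rw [Finset.mem_Icc] at hx
      exact hpos x hx.1 hx.2
    rw [hfil, Nat.card_Icc]
    omega
  have hμiσ : μ i ≤ σ := by
    rw [hμ]
    calc ((Finset.Icc 1 σ).filter (fun l => i ≤ n l)).card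
        ≤ (Finset.Icc 1 σ).card := Finset.card_filter_le _ _
      _ = σ := by rw [Nat.card_Icc]; omega
  have hμipos : 1 ≤ μ i := by
    rw [hμ]
    refine Finset.card_pos.mpr ⟨1, ?_⟩
    refine Finset.mem_filter.mpr ⟨Finset.mem_Icc.mpr ⟨le_rfl, hσ⟩, hin⟩
  have hm1 := hmonic 1 le_rfl h1le
  have hmi := hmonic i (by omega) hin
  have hd1 : (f 1).natDegree = σ := by rw [hdeg 1 le_rfl h1le, hμ1]
  have hdi : (f i).natDegree = μ i := hdeg i (by omega) hin
  have hE1 := hEis 1 le_rfl h1le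
  have hEi := hEis i (by omega) hin
  set φ := PowerSeries.constantCoeff (R := k) with hφ
  -- the reductions of f 1 and f i mod X
  have hmapf : ∀ j, 1 ≤ j → j ≤ n 1 →
      (f j).map (φ : PowerSeries k →+* k) = Polynomial.X ^ ((f j).natDegree) := by
    intro j hj1 hj
    have hmj := hmonic j hj1 hj
    ext m
    rw [Polynomial.coeff_map, Polynomial.coeff_X_pow]
    rcases lt_trichotomy m ((f j).natDegree) with h | h | h
    · have hmem := (hEis j hj1 hj).mem h
      rw [Ideal.mem_span_singleton, PowerSeries.X_dvd_iff] at hmem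
      rw [hmem, if_neg (by omega)]
    · rw [h, if_pos rfl]
      have : (f j).coeff (f j).natDegree = 1 := hmj.coeff_natDegree
      rw [this, map_one]
    · rw [Polynomial.coeff_eq_zero_of_natDegree_lt h, map_zero, if_neg (by omega)]
  set q : Polynomial (PowerSeries k) := (f 1) /ₘ (f i) with hqdef
  set ρ : Polynomial (PowerSeries k) := (f 1) %ₘ (f i) with hρdef
  have hkey : ρ + (f i) * q = f 1 := Polynomial.modByMonic_add_div (f 1) (f i)
  have hmapρ : ρ.map (φ : PowerSeries k →+* k) = 0 := by
    rw [hρdef, Polynomial.map_modByMonic _ hmi, hmapf 1 le_rfl h1le,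
      hmapf i (by omega) hin, hd1, hdi,
      Polynomial.modByMonic_eq_zero_iff_dvd (Polynomial.monic_X_pow _)]
    exact pow_dvd_pow _ hμiσ
  have hmapkey : (Polynomial.X : Polynomial k) ^ μ i * q.map (φ : PowerSeries k →+* k)
      = Polynomial.X ^ σ := by
    have h0 := congrArg (Polynomial.map (φ : PowerSeries k →+* k)) hkey
    rw [Polynomial.map_add, Polynomial.map_mul, hmapρ, hmapf i (by omega) hin, hdi,
      hmapf 1 le_rfl h1le, hd1, zero_add] at h0
    exact h0
  have hmapq : q.map (φ : PowerSeries k →+* k) = Polynomial.X ^ (σ - μ i) := by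
    apply mul_left_cancel₀ (pow_ne_zero (μ i) (Polynomial.X_ne_zero (R := k)))
    rw [hmapkey, ← pow_add]
    congr 1
    omega
  have hq0 : φ (q.coeff 0) = if (0:ℕ) = σ - μ i then 1 else 0 := by
    have h0 := congrArg (fun p => Polynomial.coeff p 0) hmapq
    simpa [Polynomial.coeff_map, Polynomial.coeff_X_pow] using h0
  have hρ0eq : ρ.coeff 0 = (f 1).coeff 0 - (f i).coeff 0 * q.coeff 0 := by
    have h0 := congrArg (fun p => Polynomial.coeff p 0) hkey
    simp only [Polynomial.coeff_add, Polynomial.mul_coeff_zero] at h0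
    exact eq_sub_of_add_eq h0
  have hai : (PowerSeries.X : PowerSeries k) ∣ (f i).coeff 0 := by
    have h0 := hEi.mem (show 0 < (f i).natDegree by omega)
    rwa [Ideal.mem_span_singleton] at h0
  have ha1 : ¬ ((PowerSeries.X : PowerSeries k) ^ 2 ∣ (f 1).coeff 0) := by
    have h0 := hE1.notMem
    rwa [Ideal.span_singleton_pow, Ideal.mem_span_singleton] at h0
  have hconst1i : ¬ ((PowerSeries.X : PowerSeries k) ^ 2 ∣ ((f 1).coeff 0 - (f i).coeff 0)) := by
    have h0 := (hconst 1 i le_rfl h1le (by omega) hin (by omega)).2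
    rwa [Ideal.span_singleton_pow, Ideal.mem_span_singleton] at h0
  have hρ0X2 : ¬ ((PowerSeries.X : PowerSeries k) ^ 2 ∣ ρ.coeff 0) := by
    intro hdvd
    by_cases hcase : σ - μ i = 0
    · have hq1 : (PowerSeries.X : PowerSeries k) ∣ (q.coeff 0 - 1) := by
        rw [PowerSeries.X_dvd_iff, map_sub, map_one, hq0, if_pos hcase.symm, sub_self]
      apply hconst1i
      have hrw : (f 1).coeff 0 - (f i).coeff 0 = ρ.coeff 0 + (f i).coeff 0 * (q.coeff 0 - 1) := by
        rw [hρ0eq]; ring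
      rw [hrw]
      refine dvd_add hdvd ?_
      obtain ⟨a, ha⟩ := hai
      obtain ⟨b, hb⟩ := hq1
      exact ⟨a * b, by rw [ha, hb]; ring⟩
    · have hq1 : (PowerSeries.X : PowerSeries k) ∣ q.coeff 0 := by
        rw [PowerSeries.X_dvd_iff, hq0, if_neg (by omega)]
      apply ha1
      have hrw : (f 1).coeff 0 = ρ.coeff 0 + (f i).coeff 0 * q.coeff 0 := by
        rw [hρ0eq]; ring
      rw [hrw]
      refine dvd_add hdvd ?_
      rw [pow_two]
      exact mul_dvd_mul hai hq1
  -- extract ρ' with ρ = C X * ρ'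
  have hCdvd : Polynomial.C (PowerSeries.X : PowerSeries k) ∣ ρ := by
    rw [Polynomial.C_dvd_iff_dvd_coeff]
    intro m
    rw [PowerSeries.X_dvd_iff]
    have h0 := congrArg (fun p => Polynomial.coeff p m) hmapρ
    simpa [Polynomial.coeff_map] using h0
  obtain ⟨ρ', hρ'⟩ := hCdvd
  have hρ'0 : PowerSeries.X * ρ'.coeff 0 = ρ.coeff 0 := by
    have h0 := congrArg (fun p => Polynomial.coeff p 0) hρ'
    simpa [Polynomial.coeff_C_mul] using h0.symm
  have hcunit : IsUnit (ρ'.coeff 0) := by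
    rw [PowerSeries.isUnit_iff_constantCoeff, isUnit_iff_ne_zero]
    intro h0
    apply hρ0X2
    obtain ⟨a, ha⟩ := PowerSeries.X_dvd_iff.mpr h0
    rw [← hρ'0, ha]
    exact ⟨a, by ring⟩
  set cu : (PowerSeries k)ˣ := hcunit.unit with hcudef
  have hcu : (cu : PowerSeries k) = ρ'.coeff 0 := hcunit.unit_spec
  set y : Polynomial (PowerSeries k) :=
    1 - Polynomial.C ((cu⁻¹ : (PowerSeries k)ˣ) : PowerSeries k) * ρ' with hy
  have hy0 : y.coeff 0 = 0 := by
    have hinv : ((cu⁻¹ : (PowerSeries k)ˣ) : PowerSeries k) * ρ'.coeff 0 = 1 := by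
      rw [← hcu]
      exact Units.inv_mul cu
    rw [hy]
    rw [Polynomial.coeff_sub, Polynomial.coeff_C_mul, hinv]
    simp
  obtain ⟨y', hy'⟩ := Polynomial.X_dvd_iff.mpr hy0
  set P : Polynomial (PowerSeries k) :=
    Polynomial.C ((cu⁻¹ : (PowerSeries k)ˣ) : PowerSeries k)
      * (∑ j ∈ Finset.range σ, y ^ j) with hP
  have hPkey : ρ' * P = 1 - Polynomial.X ^ σ * y' ^ σ := by
    have h1 : Polynomial.C ((cu⁻¹ : (PowerSeries k)ˣ) : PowerSeries k) * ρ' = 1 - y := by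
      rw [hy]; ring
    have h2 : ρ' * P = (1 - y) * ∑ j ∈ Finset.range σ, y ^ j := by
      rw [hP, ← h1]; ring
    have h3 := geom_sum_mul y σ
    have h4 : (1 - y) * ∑ j ∈ Finset.range σ, y ^ j = 1 - y ^ σ := by
      linear_combination -h3
    rw [h2, h4, hy', mul_pow]
  -- operator-theoretic facts
  have hθpow : ∀ j, j ≤ σ → Submodule.map (θ ^ j) ⊤ ≤ W j := by
    intro j
    induction j with
    | zero =>
      intro _
      rw [pow_zero, hW0]
      rintro x ⟨v, -, rfl⟩
      exact Submodule.mem_top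
    | succ m ih =>
      intro hm
      have hstep : (θ : Module.End (PowerSeries k) V) ^ (m + 1) = θ * θ ^ m := by
        rw [pow_succ']
      rw [hstep, Module.End.mul_eq_comp, Submodule.map_comp]
      refine le_trans (Submodule.map_mono (ih (by omega))) ?_
      exact hθ m (by omega)
  have hθσX : ∀ v : V, ∃ u : V, (θ ^ σ) v = (PowerSeries.X : PowerSeries k) • u := by
    intro v
    have h1 : (θ ^ σ) v ∈ W σ :=
      hθpow σ le_rfl (Submodule.mem_map_of_mem Submodule.mem_top)
    rw [hWσ, ← SetLike.mem_coe, Submodule.coe_pointwise_smul] at h1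
    obtain ⟨u, -, hu⟩ := Set.mem_smul_set.mp h1
    exact ⟨u, hu.symm⟩
  have haevalC : ∀ (g : Polynomial (PowerSeries k)) (v : V),
      Polynomial.aeval θ (Polynomial.C (PowerSeries.X : PowerSeries k) * g) v
        = (PowerSeries.X : PowerSeries k) • (Polynomial.aeval θ g v) := by
    intro g v
    rw [← Polynomial.smul_eq_C_mul, map_smul, LinearMap.smul_apply]
  have hcomm : ∀ (g h : Polynomial (PowerSeries k)) (v : V),
      Polynomial.aeval θ g (Polynomial.aeval θ h v)
        = Polynomial.aeval θ h (Polynomial.aeval θ g v) := by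
    intro g h v
    have h0 : Polynomial.aeval θ (g * h) v = Polynomial.aeval θ (h * g) v := by
      rw [mul_comm]
    rwa [map_mul, map_mul, Module.End.mul_apply, Module.End.mul_apply] at h0
  have hXfactor : ∀ v : V, ∃ u : V,
      Polynomial.aeval θ (Polynomial.X ^ σ * y' ^ σ) v = (PowerSeries.X : PowerSeries k) • u := by
    intro v
    obtain ⟨u, hu⟩ := hθσX v
    refine ⟨Polynomial.aeval θ (y' ^ σ) u, ?_⟩
    have h0 : Polynomial.X ^ σ * y' ^ σ = y' ^ σ * Polynomial.X ^ σ := mul_comm _ _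
    rw [h0, map_mul, Module.End.mul_apply, Polynomial.aeval_X_pow, hu, map_smul]
  have hsplit : ∀ v : V, ∃ u : V,
      v = Polynomial.aeval θ ρ' (Polynomial.aeval θ P v) + (PowerSeries.X : PowerSeries k) • u := by
    intro v
    obtain ⟨u, hu⟩ := hXfactor v
    refine ⟨u, ?_⟩
    have h1 : Polynomial.aeval θ (ρ' * P) v
        = v - Polynomial.aeval θ (Polynomial.X ^ σ * y' ^ σ) v := by
      rw [hPkey, map_sub, map_one]
      rfl
    rw [map_mul, Module.End.mul_apply] at h1
    rw [h1, hu]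
    abel
  -- torsion-freeness
  have hXne : (PowerSeries.X : PowerSeries k) ≠ 0 := PowerSeries.X_ne_zero
  have hXinj : ∀ a b : V, (PowerSeries.X : PowerSeries k) • a = (PowerSeries.X : PowerSeries k) • b → a = b := by
    intro a b hab
    have h0 : (PowerSeries.X : PowerSeries k) • (a - b) = 0 := by rw [smul_sub, hab, sub_self]
    rcases smul_eq_zero.mp h0 with h | h
    · exact absurd h hXne
    · exact sub_eq_zero.mp h
  have hsatKer : ∀ (g : Polynomial (PowerSeries k)) (v : V),
      (PowerSeries.X : PowerSeries k) • v ∈ LinearMap.ker (Polynomial.aeval θ g) →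
        v ∈ LinearMap.ker (Polynomial.aeval θ g) := by
    intro g v hv
    rw [LinearMap.mem_ker, map_smul] at hv
    rw [LinearMap.mem_ker]
    rcases smul_eq_zero.mp hv with h | h
    · exact absurd h hXne
    · exact h
  have hstab : ∀ (g h : Polynomial (PowerSeries k)) (v : V),
      v ∈ LinearMap.ker (Polynomial.aeval θ h) →
        Polynomial.aeval θ g v ∈ LinearMap.ker (Polynomial.aeval θ h) := by
    intro g h v hv
    rw [LinearMap.mem_ker] at hv ⊢
    rw [← hcomm g h v, hv, map_zero]
  -- f 1 applied to any vector lands in X • V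
  have hA1X : ∀ v : V, ∃ u : V,
      Polynomial.aeval θ (f 1) v = (PowerSeries.X : PowerSeries k) • u := by
    have hsub : Polynomial.C (PowerSeries.X : PowerSeries k) ∣ (f 1 - Polynomial.X ^ σ) := by
      rw [Polynomial.C_dvd_iff_dvd_coeff]
      intro m
      rw [PowerSeries.X_dvd_iff, Polynomial.coeff_sub, Polynomial.coeff_X_pow]
      rcases lt_trichotomy m σ with h | h | h
      · have hmem := hE1.mem (by omega : m < (f 1).natDegree)
        rw [Ideal.mem_span_singleton, PowerSeries.X_dvd_iff] at hmem
        rw [if_neg (by omega)]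
        simpa using hmem
      · have hlead : (f 1).coeff m = 1 := by
          rw [h, ← hd1]; exact hm1.coeff_natDegree
        rw [hlead, if_pos h]
        simp
      · rw [Polynomial.coeff_eq_zero_of_natDegree_lt (by omega), if_neg (by omega)]
        simp
    obtain ⟨g, hg⟩ := hsub
    intro v
    obtain ⟨u, hu⟩ := hθσX v
    refine ⟨u + Polynomial.aeval θ g v, ?_⟩
    have hf1 : f 1 = Polynomial.X ^ σ + Polynomial.C (PowerSeries.X : PowerSeries k) * g := by
      rw [← hg]; ring
    rw [hf1, map_add, LinearMap.add_apply, Polynomial.aeval_X_pow, hu, haevalC, smul_add]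
  -- f 1 on Ker f i acts as X • ρ'(θ)
  have hA1Ki : ∀ z ∈ LinearMap.ker (Polynomial.aeval θ (f i)),
      Polynomial.aeval θ (f 1) z = (PowerSeries.X : PowerSeries k) • Polynomial.aeval θ ρ' z := by
    intro z hz
    have h1 : Polynomial.aeval θ (f 1) z
        = Polynomial.aeval θ ρ z + Polynomial.aeval θ ((f i) * q) z := by
      conv_lhs => rw [← hkey]
      rw [map_add, LinearMap.add_apply]
    have h2 : Polynomial.aeval θ ((f i) * q) z = 0 := by
      rw [mul_comm, map_mul, Module.End.mul_apply, LinearMap.mem_ker.mp hz, map_zero]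
    rw [h1, h2, add_zero, hρ', haevalC]
  -- Nakayama setup
  have hXjac : Ideal.span {(PowerSeries.X : PowerSeries k)} ≤ Ideal.jacobson ⊥ := by
    refine le_trans ?_ (IsLocalRing.maximalIdeal_le_jacobson ⊥)
    rw [Ideal.span_le, Set.singleton_subset_iff, SetLike.mem_coe,
      IsLocalRing.mem_maximalIdeal, mem_nonunits_iff]
    intro hu
    have h0 := PowerSeries.isUnit_iff_constantCoeff.mp hu
    rw [PowerSeries.constantCoeff_X] at h0
    exact not_isUnit_zero h0
  have hfgKi : (LinearMap.ker (Polynomial.aeval θ (f i))).FG := IsNoetherian.noetherian _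
  -- surjectivity of ρ'(θ) on Ker f i
  have hsurj : ∀ w ∈ LinearMap.ker (Polynomial.aeval θ (f i)),
      ∃ z ∈ LinearMap.ker (Polynomial.aeval θ (f i)), Polynomial.aeval θ ρ' z = w := by
    have hle : LinearMap.ker (Polynomial.aeval θ (f i)) ≤
        Submodule.map (Polynomial.aeval θ ρ') (LinearMap.ker (Polynomial.aeval θ (f i)))
          ⊔ (Ideal.span {(PowerSeries.X : PowerSeries k)})
              • LinearMap.ker (Polynomial.aeval θ (f i)) := by
      intro w hw
      obtain ⟨u, hu⟩ := hsplit w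
      have h2 : (PowerSeries.X : PowerSeries k) • u
          ∈ LinearMap.ker (Polynomial.aeval θ (f i)) := by
        have heq : (PowerSeries.X : PowerSeries k) • u
            = w - Polynomial.aeval θ ρ' (Polynomial.aeval θ P w) :=
          eq_sub_of_add_eq (by rw [add_comm]; exact hu.symm)
        rw [heq]
        exact Submodule.sub_mem _ hw (hstab ρ' (f i) _ (hstab P (f i) w hw))
      have hu' : u ∈ LinearMap.ker (Polynomial.aeval θ (f i)) := hsatKer _ u h2
      refine Submodule.mem_sup.mpr
        ⟨Polynomial.aeval θ ρ' (Polynomial.aeval θ P w),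
          Submodule.mem_map_of_mem (hstab P (f i) w hw),
          (PowerSeries.X : PowerSeries k) • u,
          Submodule.smul_mem_smul (Ideal.mem_span_singleton_self _) hu', hu.symm⟩
    have hN := Submodule.le_of_le_smul_of_le_jacobson_bot hfgKi hXjac hle
    intro w hw
    obtain ⟨z, hz, hze⟩ := Submodule.mem_map.mp (hN hw)
    exact ⟨z, hz, hze⟩
  -- the main inclusion : Ker (f i ∘ f 1) ⊆ Ker f 1 ⊔ Ker f i
  have hmain : ∀ v : V, Polynomial.aeval θ (f i) (Polynomial.aeval θ (f 1) v) = 0 →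
      v ∈ LinearMap.ker (Polynomial.aeval θ (f 1)) ⊔ LinearMap.ker (Polynomial.aeval θ (f i)) := by
    intro v hv
    obtain ⟨w, hw⟩ := hA1X v
    have hwKi : w ∈ LinearMap.ker (Polynomial.aeval θ (f i)) := by
      refine hsatKer (f i) w ?_
      rw [← hw, LinearMap.mem_ker]
      exact hv
    obtain ⟨z, hzKi, hz⟩ := hsurj w hwKi
    have hvz : v - z ∈ LinearMap.ker (Polynomial.aeval θ (f 1)) := by
      rw [LinearMap.mem_ker, map_sub, hw, hA1Ki z hzKi, hz, sub_self]
    have hdec : v = (v - z) + z := by abel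
    rw [hdec]
    exact Submodule.add_mem_sup hvz hzKi
  -- saturation of the sum
  have hsatSX : ∀ v : V, (PowerSeries.X : PowerSeries k) • v ∈
      LinearMap.ker (Polynomial.aeval θ (f 1)) ⊔ LinearMap.ker (Polynomial.aeval θ (f i)) →
      v ∈ LinearMap.ker (Polynomial.aeval θ (f 1)) ⊔ LinearMap.ker (Polynomial.aeval θ (f i)) := by
    intro v hv
    obtain ⟨a, ha, b, hb, hab⟩ := Submodule.mem_sup.mp hv
    have h1 : (PowerSeries.X : PowerSeries k) • (Polynomial.aeval θ (f 1) v)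
        = Polynomial.aeval θ (f 1) b := by
      rw [← map_smul, ← hab, map_add, LinearMap.mem_ker.mp ha, zero_add]
    rw [hA1Ki b hb] at h1
    have h2 : Polynomial.aeval θ (f 1) v = Polynomial.aeval θ ρ' b := hXinj _ _ h1
    obtain ⟨w, hw⟩ := hA1X v
    obtain ⟨u, hu⟩ := hsplit b
    have hb' : b = (PowerSeries.X : PowerSeries k) • (Polynomial.aeval θ P w + u) := by
      rw [hu, hcomm ρ' P b, ← h2, hw, map_smul, smul_add]
    have hzKi : Polynomial.aeval θ P w + u ∈ LinearMap.ker (Polynomial.aeval θ (f i)) := by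
      refine hsatKer (f i) _ ?_
      rw [← hb']
      exact hb
    have hyv : a = (PowerSeries.X : PowerSeries k) • (v - (Polynomial.aeval θ P w + u)) := by
      rw [smul_sub, ← hb', ← hab]; abel
    have hvz : v - (Polynomial.aeval θ P w + u) ∈ LinearMap.ker (Polynomial.aeval θ (f 1)) := by
      refine hsatKer (f 1) _ ?_
      rw [← hyv]
      exact ha
    have hdec : v = (v - (Polynomial.aeval θ P w + u)) + (Polynomial.aeval θ P w + u) := by abel
    rw [hdec]
    exact Submodule.add_mem_sup hvz hzKi
  refine ⟨?_, ?_, ?_⟩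
  · -- image description
    apply le_antisymm
    · rintro x hx
      obtain ⟨a, ha, rfl⟩ := Submodule.mem_map.mp hx
      rw [LinearMap.mem_ker, Submodule.mkQ_apply, Submodule.mapQ_apply,
        LinearMap.mem_ker.mp ha]
      exact Submodule.Quotient.mk_zero _
    · intro x hx
      obtain ⟨v, rfl⟩ := Submodule.mkQ_surjective _ x
      rw [LinearMap.mem_ker, Submodule.mkQ_apply, Submodule.mapQ_apply,
        Submodule.Quotient.mk_eq_zero] at hx
      obtain ⟨a, ha, b, hb, hab⟩ := Submodule.mem_sup.mp (hmain v (LinearMap.mem_ker.mp hx))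
      refine Submodule.mem_map.mpr ⟨a, ha, ?_⟩
      rw [Submodule.mkQ_apply, Submodule.mkQ_apply, Submodule.Quotient.eq]
      have hav : a - v = -b := by rw [← hab]; abel
      rw [hav]
      exact Submodule.neg_mem _ hb
  · -- disjointness
    rw [disjoint_iff]
    refine Submodule.eq_bot_of_le_smul_of_le_jacobson_bot
      (Ideal.span {(PowerSeries.X : PowerSeries k)}) _ (IsNoetherian.noetherian _) ?_ hXjac
    intro v hv
    obtain ⟨hv1, hvi⟩ := Submodule.mem_inf.mp hv
    have hρ'v : Polynomial.aeval θ ρ' v = 0 := by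
      have h1 : (PowerSeries.X : PowerSeries k) • Polynomial.aeval θ ρ' v = 0 := by
        rw [← hA1Ki v hvi]
        exact LinearMap.mem_ker.mp hv1
      rcases smul_eq_zero.mp h1 with h | h
      · exact absurd h hXne
      · exact h
    obtain ⟨u, hu⟩ := hsplit v
    have hvXu : v = (PowerSeries.X : PowerSeries k) • u := by
      rw [hu, hcomm ρ' P v, hρ'v, map_zero, zero_add]
    have huK : u ∈ LinearMap.ker (Polynomial.aeval θ (f 1)) ⊓
        LinearMap.ker (Polynomial.aeval θ (f i)) := by
      refine Submodule.mem_inf.mpr ⟨hsatKer _ u ?_, hsatKer _ u ?_⟩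
      · rw [← hvXu]; exact hv1
      · rw [← hvXu]; exact hvi
    rw [hvXu]
    exact Submodule.smul_mem_smul (Ideal.mem_span_singleton_self _) huK
  · -- complement
    set S : Submodule (PowerSeries k) V :=
      LinearMap.ker (Polynomial.aeval θ (f 1)) ⊔ LinearMap.ker (Polynomial.aeval θ (f i))
      with hSdef
    have hsatpow : ∀ (m : ℕ) (v : V),
        ((PowerSeries.X : PowerSeries k) ^ m) • v ∈ S → v ∈ S := by
      intro m
      induction m with
      | zero => intro v hv; rwa [pow_zero, one_smul] at hv
      | succ m ih =>
        intro v hv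
        rw [pow_succ, mul_smul] at hv
        exact hsatSX v (ih _ hv)
    have hsat : ∀ (c : PowerSeries k), c ≠ 0 → ∀ v : V, c • v ∈ S → v ∈ S := by
      intro c hc v hcv
      have hdu : IsUnit (PowerSeries.divXPowOrder c) := PowerSeries.isUnit_divided_by_X_pow_order hc
      have hfac := (PowerSeries.X_pow_order_mul_divXPowOrder (f := c)).symm
      have h1 : ((PowerSeries.X : PowerSeries k)
            ^ ((PowerSeries.order c).toNat)
          * PowerSeries.divXPowOrder c) • v ∈ S := by
        rw [← hfac]; exact hcv
      rw [mul_smul] at h1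
      have h2 : (PowerSeries.divXPowOrder c) • v ∈ S := hsatpow _ _ h1
      obtain ⟨du, hdu'⟩ := hdu
      have h3 : v = ((du⁻¹ : (PowerSeries k)ˣ) : PowerSeries k)
          • ((PowerSeries.divXPowOrder c) • v) := by
        rw [← hdu', ← mul_smul, Units.inv_mul, one_smul]
      rw [h3]
      exact Submodule.smul_mem _ _ h2
    haveI hnzd : NoZeroSMulDivisors (PowerSeries k) (V ⧸ S) := by
      constructor
      intro c x hcx
      by_cases hc : c = 0
      · exact Or.inl hc
      · right
        obtain ⟨v, rfl⟩ := Submodule.mkQ_surjective S x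
        rw [Submodule.mkQ_apply, ← Submodule.Quotient.mk_smul,
          Submodule.Quotient.mk_eq_zero] at hcx
        rw [Submodule.mkQ_apply, Submodule.Quotient.mk_eq_zero]
        exact hsat c hc v hcx
    haveI : Module.Free (PowerSeries k) (V ⧸ S) := Module.free_of_finite_type_torsion_free'
    obtain ⟨s, hs⟩ := Module.projective_lifting_property S.mkQ LinearMap.id
      (Submodule.mkQ_surjective S)
    have hsx : ∀ x : V ⧸ S, S.mkQ (s x) = x := by
      intro x
      have h0 := LinearMap.congr_fun hs x
      simpa using h0
    refine ⟨LinearMap.range s, ?_, ?_⟩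
    · rw [Submodule.disjoint_def]
      intro x hxS hxr
      obtain ⟨z, rfl⟩ := hxr
      have hz : z = 0 := by
        rw [← hsx z, Submodule.mkQ_apply, Submodule.Quotient.mk_eq_zero]
        exact hxS
      rw [hz, map_zero]
    · rw [codisjoint_iff, eq_top_iff]
      intro v _
      have hv : v - s (S.mkQ v) ∈ S := by
        rw [← Submodule.Quotient.mk_eq_zero S, ← Submodule.mkQ_apply, map_sub, hsx (S.mkQ v),
          sub_self]
      have hdec : v = (v - s (S.mkQ v)) + s (S.mkQ v) := by abel
      exact hdec ▸ Submodule.add_mem_sup hv ⟨S.mkQ v, rfl⟩
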